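/- Let A ⊆ ℤ × ℤ be a finite connected set of grid cells with |A| > 1, let s be the topmost cell of the leftmost occupied column of A, and suppose A \ {s} is disconnected. Then A \ {s} has exactly two connected components. -/

import Mathlib

/-- Two grid cells are adjacent iff they differ by 1 in exactly one coordinate. -/
def Adj (p q : ℤ × ℤ) : Prop :=
  (p.1 = q.1 ∧ (p.2 = q.2 + 1 ∨ q.2 = p.2 + 1)) ∨
  (p.2 = q.2 ∧ (p.1 = q.1 + 1 ∨ q.1 = p.1 + 1))

/-- Reachability within a set of cells via grid adjacency. -/
def Reach (S : Set (ℤ × ℤ)) (p q : ℤ × ℤ) : Prop :=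
  Relation.ReflTransGen (fun a b => Adj a b ∧ a ∈ S ∧ b ∈ S) p q

/-- A set of cells induces a connected subgraph of the grid adjacency graph. -/
def ConnIn (S : Set (ℤ × ℤ)) : Prop := ∀ p ∈ S, ∀ q ∈ S, Reach S p q

/-- The shadow (upward closure) of a set of cells. -/
def Sh (S : Set (ℤ × ℤ)) : Set (ℤ × ℤ) := {c | ∃ j' ≤ c.2, (c.1, j') ∈ S}

lemma adj_symm {p q : ℤ × ℤ} (h : Adj p q) : Adj q p := by
  unfold Adj at *; tauto

lemma reach_symm {S : Set (ℤ × ℤ)} {p q : ℤ × ℤ} (h : Reach S p q) : Reach S q p := by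
  have hsymm : Std.Symm (fun a b : ℤ × ℤ => Adj a b ∧ a ∈ S ∧ b ∈ S) := by
    refine ⟨?_⟩
    rintro a b ⟨h1, h2, h3⟩
    exact ⟨adj_symm h1, h3, h2⟩
  exact Relation.ReflTransGen.stdSymm.symm _ _ h

lemma reach_trans {S : Set (ℤ × ℤ)} {p q r : ℤ × ℤ} (h : Reach S p q) (h' : Reach S q r) :
    Reach S p r := Relation.ReflTransGen.trans h h'

/-- classification of the neighbors of s in A -/
lemma nbr_class (A : Set (ℤ × ℤ)) (s : ℤ × ℤ)
    (hleft : ∀ q ∈ A, s.1 ≤ q.1) (htop : ∀ q ∈ A, q.1 = s.1 → q.2 ≤ s.2)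
    {q : ℤ × ℤ} (hq : q ∈ A) (h : Adj q s) :
    q = (s.1, s.2 - 1) ∨ q = (s.1 + 1, s.2) := by
  have h1 := hleft q hq
  have h2 := htop q hq
  obtain ⟨x, y⟩ := s
  obtain ⟨a, b⟩ := q
  simp only [Adj, Prod.mk.injEq] at *
  omega

/-- every point of A other than s reaches a neighbor of s inside A \ {s} -/
lemma reach_nbr (A : Set (ℤ × ℤ)) (hconn : ConnIn A) (s : ℤ × ℤ) (hs : s ∈ A)
    (hleft : ∀ q ∈ A, s.1 ≤ q.1) (htop : ∀ q ∈ A, q.1 = s.1 → q.2 ≤ s.2)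
    {q : ℤ × ℤ} (hq : q ∈ A) (hqs : q ≠ s) :
    ∃ t, (t = (s.1, s.2 - 1) ∨ t = (s.1 + 1, s.2)) ∧ t ∈ A \ {s} ∧
      Reach (A \ {s}) q t := by
  have h : Reach A q s := hconn q hq s hs
  unfold Reach at h
  induction h using Relation.ReflTransGen.head_induction_on with
  | refl => exact absurd rfl hqs
  | @head a c step rest ih =>
    obtain ⟨hadj, haA, hcA⟩ := step
    by_cases hc : c = s
    · have hcl := nbr_class A s hleft htop haA (hc ▸ hadj)
      exact ⟨a, hcl, ⟨haA, hqs⟩, Relation.ReflTransGen.refl⟩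
    · obtain ⟨t, ht1, ht2, ht3⟩ := ih hcA hc
      exact ⟨t, ht1, ht2, Relation.ReflTransGen.head
        ⟨hadj, ⟨haA, hqs⟩, ⟨hcA, hc⟩⟩ ht3⟩

/-- a reachability path starting in the component of d stays in it -/
lemma reach_in_comp (S : Set (ℤ × ℤ)) (d : ℤ × ℤ) {p q : ℤ × ℤ}
    (hp : p ∈ S) (hdp : Reach S d p) (h : Reach S p q) :
    Reach {x | x ∈ S ∧ Reach S d x} p q := by
  induction h with
  | refl => exact Relation.ReflTransGen.refl
  | tail hpb step ih =>
    rename_i b c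
    obtain ⟨hadj, hbS, hcS⟩ := step
    have hdb : Reach S d b := reach_trans hdp hpb
    have hdc : Reach S d c := hdb.tail ⟨hadj, hbS, hcS⟩
    exact ih.tail ⟨hadj, ⟨hbS, hdb⟩, ⟨hcS, hdc⟩⟩

theorem two_components (A : Set (ℤ × ℤ)) (hfin : A.Finite) (hconn : ConnIn A)
    (hcard : 1 < A.ncard)
    (s : ℤ × ℤ) (hs : s ∈ A)
    (hleft : ∀ q ∈ A, s.1 ≤ q.1)
    (htop : ∀ q ∈ A, q.1 = s.1 → q.2 ≤ s.2)
    (hdisc : ¬ ConnIn (A \ {s})) :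
    ∃ C₁ C₂ : Set (ℤ × ℤ), C₁.Nonempty ∧ C₂.Nonempty ∧ Disjoint C₁ C₂ ∧
      C₁ ∪ C₂ = A \ {s} ∧ ConnIn C₁ ∧ ConnIn C₂ ∧
      (∀ p ∈ C₁, ∀ q ∈ C₂, ¬ Adj p q) := by
  set d : ℤ × ℤ := (s.1, s.2 - 1) with hd_def
  set r : ℤ × ℤ := (s.1 + 1, s.2) with hr_def
  set S : Set (ℤ × ℤ) := A \ {s} with hS_def
  have key : ∀ q ∈ S, ∃ t, (t = d ∨ t = r) ∧ t ∈ S ∧ Reach S q t := by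
    rintro q ⟨hqA, hqs⟩
    exact reach_nbr A hconn s hs hleft htop hqA hqs
  -- both neighbors exist
  have hdr_ne : d ≠ r := by
    intro h
    rw [hd_def, hr_def, Prod.mk.injEq] at h
    omega
  -- if all points reach one common point t, S is connected: contradiction
  have conn_of : ∀ t ∈ S, (∀ q ∈ S, Reach S q t) → False := by
    intro t _ hall
    apply hdisc
    intro p hp q hq
    exact reach_trans (hall p hp) (reach_symm (hall q hq))
  have hdS : d ∈ S := by
    by_contra hd
    obtain ⟨q0, hq0, hq0s⟩ := Set.exists_ne_of_one_lt_ncard hcard s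
    obtain ⟨t0, ht0s, ht0S, _⟩ := key q0 ⟨hq0, hq0s⟩
    have ht0 : t0 = r := by
      rcases ht0s with h | h
      · exact absurd (h ▸ ht0S) hd
      · exact h
    refine conn_of r (ht0 ▸ ht0S) ?_
    intro q hq
    obtain ⟨t, hts, htS, hr⟩ := key q hq
    rcases hts with h | h
    · exact absurd (h ▸ htS) hd
    · exact h ▸ hr
  have hrS : r ∈ S := by
    by_contra hr
    refine conn_of d hdS ?_
    intro q hq
    obtain ⟨t, hts, htS, hrch⟩ := key q hq
    rcases hts with h | h
    · exact h ▸ hrch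
    · exact absurd (h ▸ htS) hr
  -- d and r are not connected in S
  have hdr : ¬ Reach S d r := by
    intro h
    refine conn_of d hdS ?_
    intro q hq
    obtain ⟨t, hts, _, hrch⟩ := key q hq
    rcases hts with ht | ht
    · exact ht ▸ hrch
    · exact reach_trans (ht ▸ hrch) (reach_symm h)
  set C₁ : Set (ℤ × ℤ) := {x | x ∈ S ∧ Reach S d x} with hC1
  set C₂ : Set (ℤ × ℤ) := {x | x ∈ S ∧ Reach S r x} with hC2
  have hmem1 : ∀ x, x ∈ C₁ ↔ x ∈ S ∧ Reach S d x := fun x => Iff.rfl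
  have hmem2 : ∀ x, x ∈ C₂ ↔ x ∈ S ∧ Reach S r x := fun x => Iff.rfl
  have hdisj : Disjoint C₁ C₂ := by
    rw [Set.disjoint_left]
    rintro x ⟨_, hx1⟩ ⟨_, hx2⟩
    exact hdr (reach_trans hx1 (reach_symm hx2))
  refine ⟨C₁, C₂, ⟨d, hdS, Relation.ReflTransGen.refl⟩,
    ⟨r, hrS, Relation.ReflTransGen.refl⟩, hdisj, ?_, ?_, ?_, ?_⟩
  · -- union
    apply Set.Subset.antisymm
    · rintro x (⟨hx, _⟩ | ⟨hx, _⟩) <;> exact hx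
    · intro q hq
      obtain ⟨t, hts, htS, hrch⟩ := key q hq
      rcases hts with h | h
      · exact Or.inl ⟨hq, reach_symm (h ▸ hrch)⟩
      · exact Or.inr ⟨hq, reach_symm (h ▸ hrch)⟩
  · -- ConnIn C₁
    rintro p ⟨hpS, hpd⟩ q ⟨hqS, hqd⟩
    have : Reach S p q := reach_trans (reach_symm hpd) hqd
    exact reach_in_comp S d hpS hpd this
  · -- ConnIn C₂
    rintro p ⟨hpS, hpd⟩ q ⟨hqS, hqd⟩
    have : Reach S p q := reach_trans (reach_symm hpd) hqd
    exact reach_in_comp S r hpS hpd this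
  · -- no adjacency between C₁ and C₂
    rintro p ⟨hpS, hpd⟩ q ⟨hqS, hqr⟩ hadj
    have : Reach S d q := hpd.tail ⟨hadj, hpS, hqS⟩
    exact hdr (reach_trans this (reach_symm hqr))
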